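/- arXiv:1611.08852 — 3 statements merged into one kernel-verified Lean document; each statement's English description precedes it below -/
import Mathlib

section
/- Let H be a subgroup of a finite group G. The complement G \ H is a non-empty maximal sum-free subset of G if and only if H has index 2 in G. -/
/-- `G \ H` is a nonempty maximal sum-free subset iff `[G : H] = 2`. -/
theorem compl_subgroup_maximal_sumFree_iff_index_two {G : Type*} [AddGroup G] [Finite G]
    (H : AddSubgroup G) :
    (((H : Set G)ᶜ).Nonempty ∧
      (∀ a ∈ (H : Set G)ᶜ, ∀ b ∈ (H : Set G)ᶜ, a + b ∉ (H : Set G)ᶜ) ∧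
      (∀ x ∈ (H : Set G), ¬ (∀ a ∈ insert x (H : Set G)ᶜ, ∀ b ∈ insert x (H : Set G)ᶜ,
        a + b ∉ insert x (H : Set G)ᶜ))) ↔ H.index = 2 := by
  constructor
  · rintro ⟨⟨a, ha⟩, hsf, -⟩
    rw [AddSubgroup.index_eq_two_iff]
    refine ⟨a, fun b => ?_⟩
    rw [xor_iff_iff_not]
    constructor
    · intro hba hb
      exact ha ((AddSubgroup.add_mem_cancel_left H hb).1 hba)
    · intro hb
      by_contra hba
      exact hsf b hb a ha (by simpa using hba)
  · intro hidx
    have hne : ((H : Set G)ᶜ).Nonempty := by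
      rw [Set.nonempty_compl]
      intro h
      rw [AddSubgroup.coe_eq_univ] at h
      rw [h] at hidx
      simp at hidx
    refine ⟨hne, ?_, ?_⟩
    · intro a ha b hb hab
      exact hab ((AddSubgroup.add_mem_iff_of_index_two hidx).2 (by simp_all))
    · intro x hx hcon
      obtain ⟨a, ha⟩ := hne
      have hax : a + x ∉ (H : Set G) := fun h => ha (by
        simpa using AddSubgroup.sub_mem H h hx)
      exact hcon a (Set.mem_insert_of_mem _ ha) x (Set.mem_insert _ _)
        (Set.mem_insert_of_mem _ hax)
end

section
/- If H is a subgroup of index 2 in a group G, then for every z ∈ H, the set (G \ H) ∪ {z} is not sum-free. -/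
/-- If `[G : H] = 2` then for every `z ∈ H`, `(G \ H) ∪ {z}` is not sum-free. -/
theorem insert_compl_subgroup_not_sumFree {G : Type*} [AddGroup G]
    (H : AddSubgroup G) (h : H.index = 2) :
    ∀ z ∈ (H : Set G), ¬ (∀ a ∈ insert z (H : Set G)ᶜ, ∀ b ∈ insert z (H : Set G)ᶜ,
      a + b ∉ insert z (H : Set G)ᶜ) := by
  intro z hz hsf
  have hne : H ≠ ⊤ := by
    intro ht
    rw [ht, AddSubgroup.index_top] at h
    omega
  obtain ⟨x, hx⟩ : ∃ x, x ∉ H := by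
    by_contra hc
    push_neg at hc
    exact hne (AddSubgroup.eq_top_iff' H |>.mpr hc)
  have hb : -x + z ∉ H := fun hm => hx (by
    have : -x ∈ H := by simpa using H.sub_mem hm hz
    simpa using H.neg_mem this)
  exact hsf x (Set.mem_insert_of_mem _ hx) (-x + z) (Set.mem_insert_of_mem _ hb)
    (by simp [add_neg_cancel_left])
end

section
/- Let G be a finite group such that the set of maximal sum-free subsets of G coincides with the set of complements of maximal subgroups of G. Then G is an elementary abelian 2-group. -/
/-- If the maximal sum-free subsets of a finite group `G` are exactly the complements
of maximal subgroups, then `G` is an elementary abelian 2-group. -/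
theorem elementary_abelian_of_maximal_sumFree_eq {G : Type*} [AddGroup G] [Finite G]
    (h : {A : Set G | (∀ a ∈ A, ∀ b ∈ A, a + b ∉ A) ∧
        ∀ x ∉ A, ¬ (∀ a ∈ insert x A, ∀ b ∈ insert x A, a + b ∉ insert x A)} =
      {A : Set G | ∃ H : AddSubgroup G, IsCoatom H ∧ A = (H : Set G)ᶜ}) :
    (∀ x y : G, x + y = y + x) ∧ ∀ x : G, x + x = 0 := by
  have key : ∀ x : G, x + x = 0 := by
    intro x
    by_contra hx
    -- the singleton {x+x} is sum-free
    set p : Set G → Prop := fun A => (x + x) ∈ A ∧ ∀ a ∈ A, ∀ b ∈ A, a + b ∉ A with hp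
    have hp0 : p {x + x} := by
      refine ⟨rfl, ?_⟩
      rintro a (rfl : a = x + x) b (rfl : b = x + x) (hmem : _ = x + x)
      exact hx (add_eq_left.mp hmem)
    obtain ⟨A, -, hpA, hmax⟩ := Finite.exists_le_maximal hp0
    -- A is a maximal sum-free set
    have hALHS : A ∈ {A : Set G | (∀ a ∈ A, ∀ b ∈ A, a + b ∉ A) ∧
        ∀ y ∉ A, ¬ (∀ a ∈ insert y A, ∀ b ∈ insert y A, a + b ∉ insert y A)} := by
      refine ⟨hpA.2, ?_⟩
      intro y hy hsf
      have hins : p (insert y A) := ⟨Set.mem_insert_of_mem _ hpA.1, hsf⟩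
      have := hmax hins (Set.subset_insert y A)
      exact hy (this (Set.mem_insert y A))
    rw [h] at hALHS
    obtain ⟨H, -, rfl⟩ := hALHS
    have h2x : (x + x) ∉ (H : Set G) := hpA.1
    have hxH : x ∉ (H : Set G) := fun hxH => h2x (H.add_mem hxH hxH)
    exact hpA.2 x hxH x hxH hpA.1
  refine ⟨?_, key⟩
  intro x y
  have hneg : ∀ a : G, -a = a := fun a => neg_eq_of_add_eq_zero_left (key a)
  calc x + y = -x + -y := by rw [hneg, hneg]
    _ = -(y + x) := (neg_add_rev y x).symm
    _ = y + x := hneg _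
end
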